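/- Let K, L ⊂ ℝⁿ be nonempty compact convex sets with K ≠ L. Then there exist p ∈ K and q ∈ L with |q − p| = d_H(K,L) such that either (i) the half-open segment (p,q] is contained in (K ∪̃ L) \ K and K ⊆ {x ∈ ℝⁿ : ⟨q − p, x − p⟩ ≤ 0}, or (ii) the half-open segment [p,q) is contained in (K ∪̃ L) \ L and L ⊆ {x ∈ ℝⁿ : ⟨p − q, x − q⟩ ≤ 0}. In particular, in case (i) the hyperplane through p orthogonal to [p,q] supports K, and in case (ii) the hyperplane through q orthogonal to [p,q] supports L. -/

import Mathlib

open Metric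
open scoped RealInnerProductSpace

private lemma aux8 {n : ℕ} {K : Set (EuclideanSpace ℝ (Fin n))}
    (hKne : K.Nonempty) (hKcp : IsCompact K) (hKcv : Convex ℝ K)
    (q : EuclideanSpace ℝ (Fin n)) (hq : 0 < infDist q K) :
    ∃ p ∈ K, ‖q - p‖ = infDist q K ∧
      (∀ x ∈ segment ℝ p q, x ≠ p → x ∉ K) ∧
      ∀ x ∈ K, ⟪q - p, x - p⟫ ≤ 0 := by
  obtain ⟨p, hpK, hdist⟩ := hKcp.exists_infDist_eq_dist hKne q
  have hnorm : ‖q - p‖ = infDist q K := by rw [hdist, dist_eq_norm]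
  have hiInf : ‖q - p‖ = ⨅ w : K, ‖q - w‖ := by
    rw [hnorm, infDist_eq_iInf]; simp_rw [dist_eq_norm]
  have hhalf : ∀ x ∈ K, ⟪q - p, x - p⟫ ≤ 0 :=
    (norm_eq_iInf_iff_real_inner_le_zero hKcv hpK).mp hiInf
  refine ⟨p, hpK, hnorm, ?_, hhalf⟩
  rintro x ⟨a, b, ha, hb, hab, rfl⟩ hne hmem
  have hbpos : 0 < b := by
    rcases hb.lt_or_eq with h | h
    · exact h
    · exfalso; apply hne
      have ha1 : a = 1 := by linarith
      simp [← h, ha1]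
  have hx : a • p + b • q - p = b • (q - p) := by
    have : a = 1 - b := by linarith
    rw [this]
    module
  have := hhalf _ hmem
  rw [hx, real_inner_smul_right, real_inner_self_eq_norm_sq, hnorm] at this
  nlinarith [mul_pos hbpos (pow_pos hq 2)]
theorem stmt8 {n : ℕ} (K L : Set (EuclideanSpace ℝ (Fin n)))
    (hKne : K.Nonempty) (hKcp : IsCompact K) (hKcv : Convex ℝ K)
    (hLne : L.Nonempty) (hLcp : IsCompact L) (hLcv : Convex ℝ L)
    (hKL : K ≠ L) :
    ∃ p ∈ K, ∃ q ∈ L, ‖q - p‖ = hausdorffDist K L ∧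
      ((segment ℝ p q \ {p} ⊆ closure (convexHull ℝ (K ∪ L)) \ K ∧
          K ⊆ {x : EuclideanSpace ℝ (Fin n) | ⟪q - p, x - p⟫ ≤ 0}) ∨
        (segment ℝ p q \ {q} ⊆ closure (convexHull ℝ (K ∪ L)) \ L ∧
          L ⊆ {x : EuclideanSpace ℝ (Fin n) | ⟪p - q, x - q⟫ ≤ 0})) := by
  set d := hausdorffDist K L with hd
  have hfin : EMetric.hausdorffEdist K L ≠ ⊤ :=
    Metric.hausdorffEdist_ne_top_of_nonempty_of_bounded hKne hLne hKcp.isBounded hLcp.isBounded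
  have hfin' : Metric.hausdorffEDist L K ≠ ⊤ := by rw [Metric.hausdorffEDist_comm]; exact hfin
  have hdpos : 0 < d := by
    rcases (hausdorffDist_nonneg (s := K) (t := L)).lt_or_eq with h | h
    · exact h
    · exfalso; apply hKL
      rw [← EMetric.hausdorffEdist_zero_iff_eq_of_closed hKcp.isClosed hLcp.isClosed]
      have : (EMetric.hausdorffEdist K L).toReal = 0 := h.symm
      rcases ENNReal.toReal_eq_zero_iff _ |>.mp this with h' | h'
      · exact h'
      · exact absurd h' hfin
  -- attain the sups
  obtain ⟨k₀, hk₀K, hk₀max⟩ := hKcp.exists_isMaxOn hKne (continuous_infDist_pt L).continuousOn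
  obtain ⟨l₀, hl₀L, hl₀max⟩ := hLcp.exists_isMaxOn hLne (continuous_infDist_pt K).continuousOn
  have h1 : infDist k₀ L ≤ d := infDist_le_hausdorffDist_of_mem hk₀K hfin
  have h2 : infDist l₀ K ≤ d := by
    rw [hd, hausdorffDist_comm]
    exact infDist_le_hausdorffDist_of_mem hl₀L hfin'
  have hmax : d ≤ max (infDist k₀ L) (infDist l₀ K) := by
    apply hausdorffDist_le_of_infDist
    · exact le_max_of_le_left infDist_nonneg
    · exact fun x hx => le_max_of_le_left (hk₀max hx)
    · exact fun x hx => le_max_of_le_right (hl₀max hx)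
  have hcases : infDist l₀ K = d ∨ infDist k₀ L = d := by
    rcases le_total (infDist k₀ L) (infDist l₀ K) with h | h
    · left; exact le_antisymm h2 (by simpa [max_eq_right h] using hmax)
    · right; exact le_antisymm h1 (by simpa [max_eq_left h] using hmax)
  rcases hcases with hld | hkd
  · -- case (i): L sticks out at l₀
    obtain ⟨p, hpK, hnorm, hseg, hhalf⟩ := aux8 hKne hKcp hKcv l₀ (hld ▸ hdpos)
    refine ⟨p, hpK, l₀, hl₀L, by rw [hnorm, hld], Or.inl ⟨?_, hhalf⟩⟩
    rintro x ⟨hx, hxp⟩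
    refine ⟨subset_closure ?_, hseg x hx (by simpa using hxp)⟩
    exact segment_subset_convexHull (Set.mem_union_left _ hpK) (Set.mem_union_right _ hl₀L) hx
  · -- case (ii): K sticks out at k₀
    obtain ⟨r, hrL, hnorm, hseg, hhalf⟩ := aux8 hLne hLcp hLcv k₀ (hkd ▸ hdpos)
    refine ⟨k₀, hk₀K, r, hrL, ?_, Or.inr ⟨?_, hhalf⟩⟩
    · rw [← norm_neg]; simpa using hnorm.trans hkd
    · rintro x ⟨hx, hxr⟩
      rw [segment_symm] at hx
      refine ⟨subset_closure ?_, hseg x hx (by simpa using hxr)⟩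
      exact segment_subset_convexHull (Set.mem_union_right _ hrL) (Set.mem_union_left _ hk₀K) hx
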